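/- Let k ≥ 2, d ≥ 1, T ≥ 1, and let (x_1,y_1),…,(x_T,y_T) ∈ ℝ^d × {1,…,k} be any sequence with ‖x_t‖ ≤ X for all t ∈ [T]. Run the multiclass Perceptron on this sequence and let M_T be its number of mistakes. Then for every U ∈ ℝ^{k×d}, writing L_1 = Σ_{t=1}^T ℓ(U,(x_t,y_t)) for the cumulative multiclass hinge loss of U, one has M_T ≤ L_1 + 2 X² ‖U‖_F² + X ‖U‖_F √2 √(L_1). -/
import Mathlib

open Finset

def minner {k d : ℕ} (A B : Matrix (Fin k) (Fin d) ℝ) : ℝ :=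
  ∑ i, ∑ j, A i j * B i j

lemma minner_nonneg {k d : ℕ} (A : Matrix (Fin k) (Fin d) ℝ) : 0 ≤ minner A A :=
  Finset.sum_nonneg fun _ _ => Finset.sum_nonneg fun _ _ => mul_self_nonneg _

lemma minner_add_smul_right {k d : ℕ} (A B C : Matrix (Fin k) (Fin d) ℝ) (r : ℝ) :
    minner A (B + r • C) = minner A B + r * minner A C := by
  simp only [minner, Matrix.add_apply, Matrix.smul_apply, smul_eq_mul, Finset.mul_sum,
    ← Finset.sum_add_distrib]
  refine Finset.sum_congr rfl fun i _ => Finset.sum_congr rfl fun j _ => by ring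

lemma minner_expand {k d : ℕ} (A B : Matrix (Fin k) (Fin d) ℝ) (r : ℝ) :
    minner (A + r • B) (A + r • B)
      = minner A A + 2 * r * minner A B + r ^ 2 * minner B B := by
  simp only [minner, Matrix.add_apply, Matrix.smul_apply, smul_eq_mul, Finset.mul_sum,
    ← Finset.sum_add_distrib]
  refine Finset.sum_congr rfl fun i _ => Finset.sum_congr rfl fun j _ => by ring

lemma minner_vecMulVec {k d : ℕ} (A : Matrix (Fin k) (Fin d) ℝ) (u : Fin k → ℝ)
    (v : Fin d → ℝ) : minner A (Matrix.vecMulVec u v) = ∑ i, u i * A.mulVec v i := by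
  simp only [minner, Matrix.vecMulVec_apply, Matrix.mulVec, dotProduct, Finset.mul_sum]
  refine Finset.sum_congr rfl fun i _ => Finset.sum_congr rfl fun j _ => by ring

lemma sum_single_diff {k : ℕ} (a b : Fin k) (f : Fin k → ℝ) :
    ∑ i : Fin k, (Pi.single a 1 - Pi.single b 1 : Fin k → ℝ) i * f i = f a - f b := by
  simp [Pi.single_apply, sub_mul, ite_mul, Finset.sum_sub_distrib]

lemma sum_single_diff_sq {k : ℕ} (a b : Fin k) (hab : a ≠ b) :
    ∑ i : Fin k, (Pi.single a 1 - Pi.single b 1 : Fin k → ℝ) i ^ 2 = 2 := by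
  have h : ∀ i : Fin k, (Pi.single a 1 - Pi.single b 1 : Fin k → ℝ) i ^ 2
      = (if i = a then (1:ℝ) else 0) + (if i = b then (1:ℝ) else 0) := by
    intro i
    by_cases h1 : i = a <;> by_cases h2 : i = b <;>
      simp_all [Pi.single_apply]
  rw [Finset.sum_congr rfl fun i _ => h i, Finset.sum_add_distrib]
  simp
  norm_num

lemma vecMulVec_self {k d : ℕ} (u : Fin k → ℝ) (v : Fin d → ℝ) :
    minner (Matrix.vecMulVec u v) (Matrix.vecMulVec u v)
      = (∑ i, u i ^ 2) * (∑ j, v j ^ 2) := by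
  rw [Finset.sum_mul_sum]
  simp only [minner, Matrix.vecMulVec_apply]
  refine Finset.sum_congr rfl fun i _ => Finset.sum_congr rfl fun j _ => by ring

lemma minner_cauchy {k d : ℕ} (A B : Matrix (Fin k) (Fin d) ℝ) :
    minner A B ≤ Real.sqrt (minner A A) * Real.sqrt (minner B B) := by
  have h1 : minner A B ≤ Real.sqrt ((minner A B) ^ 2) := by
    rw [Real.sqrt_sq_eq_abs]; exact le_abs_self _
  have h2 : (minner A B) ^ 2 ≤ (minner A A) * (minner B B) := by
    have := Finset.sum_mul_sq_le_sq_mul_sq Finset.univ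
      (fun p : Fin k × Fin d => A p.1 p.2) (fun p : Fin k × Fin d => B p.1 p.2)
    simpa [minner, Fintype.sum_prod_type, pow_two] using this
  calc minner A B ≤ Real.sqrt ((minner A B)^2) := h1
    _ ≤ Real.sqrt ((minner A A) * (minner B B)) := Real.sqrt_le_sqrt h2
    _ = _ := Real.sqrt_mul (minner_nonneg A) _

lemma quad_bound (sq l cv : ℝ) (hsq : 0 ≤ sq) (hl : 0 ≤ l) (hc : 0 ≤ cv)
    (h : sq ^ 2 ≤ l * l + cv * sq) : sq ^ 2 ≤ l * l + cv ^ 2 + cv * l := by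
  have hs_le : sq ≤ cv + l := by
    by_contra hlt
    push_neg at hlt
    nlinarith
  nlinarith

/-- Multiclass hinge loss: `max_{i ≠ y} [1 - (Ux)_y + (Ux)_i]_+`. -/
noncomputable def mcHinge {k d : ℕ} (U : Matrix (Fin k) (Fin d) ℝ)
    (x : Fin d → ℝ) (y : Fin k) : ℝ :=
  ⨆ i : {i : Fin k // i ≠ y}, max 0 (1 - U.mulVec x y + U.mulVec x i.val)

theorem multiclass_perceptron_hinge_mistake_bound
    (k d T : ℕ) (hk : 2 ≤ k) (hd : 1 ≤ d) (hT : 1 ≤ T)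
    (x : Fin T → Fin d → ℝ) (y : Fin T → Fin k)
    (W : ℕ → Matrix (Fin k) (Fin d) ℝ) (yh : Fin T → Fin k)
    (hW0 : W 0 = 0)
    (hargmax : ∀ t : Fin T, ∀ i : Fin k,
      (W t.val).mulVec (x t) i ≤ (W t.val).mulVec (x t) (yh t))
    (hWsucc : ∀ t : Fin T, W (t.val + 1) =
      W t.val + (if yh t ≠ y t then (1:ℝ) else 0) •
        Matrix.vecMulVec (Pi.single (y t) 1 - Pi.single (yh t) 1) (x t))
    (M : ℝ) (hM : M = ∑ t, if yh t ≠ y t then (1:ℝ) else 0)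
    (X : ℝ) (hX : ∀ t, Real.sqrt (∑ j, x t j ^ 2) ≤ X)
    (U : Matrix (Fin k) (Fin d) ℝ)
    (L₁ : ℝ) (hL₁ : L₁ = ∑ t, mcHinge U (x t) (y t)) :
    M ≤ L₁ + 2 * X ^ 2 * (Real.sqrt (∑ i, ∑ j, U i j ^ 2)) ^ 2
      + X * Real.sqrt (∑ i, ∑ j, U i j ^ 2) * Real.sqrt 2 * Real.sqrt L₁ := by
  classical
  have hXnn : 0 ≤ X :=
    le_trans (Real.sqrt_nonneg _) (hX ⟨0, lt_of_lt_of_le Nat.one_pos hT⟩)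
  -- hinge loss facts
  have hinge_nonneg : ∀ t : Fin T, 0 ≤ mcHinge U (x t) (y t) := by
    intro t
    obtain ⟨i, hi⟩ := Fintype.exists_ne_of_one_lt_card (by simp; omega) (y t)
    have hb := Set.Finite.bddAbove (Set.finite_range
      (fun i : {i : Fin k // i ≠ y t} => max 0 (1 - U.mulVec (x t) (y t) + U.mulVec (x t) i.val)))
    have h := le_ciSup hb (⟨i, hi⟩ : {i : Fin k // i ≠ y t})
    exact le_trans (le_max_left _ _) h
  have hinge_ge : ∀ t : Fin T, yh t ≠ y t →
      1 - U.mulVec (x t) (y t) + U.mulVec (x t) (yh t) ≤ mcHinge U (x t) (y t) := by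
    intro t ht
    have hb := Set.Finite.bddAbove (Set.finite_range
      (fun i : {i : Fin k // i ≠ y t} => max 0 (1 - U.mulVec (x t) (y t) + U.mulVec (x t) i.val)))
    have h := le_ciSup hb (⟨yh t, ht⟩ : {i : Fin k // i ≠ y t})
    exact le_trans (le_max_right _ _) h
  -- ℕ-indexed versions
  set c : ℕ → ℝ := fun n =>
    if h : n < T then (if yh ⟨n, h⟩ ≠ y ⟨n, h⟩ then (1:ℝ) else 0) else 0 with hc
  set gq : ℕ → ℝ := fun n =>
    if h : n < T then
      (U.mulVec (x ⟨n, h⟩) (y ⟨n, h⟩) - U.mulVec (x ⟨n, h⟩) (yh ⟨n, h⟩)) else 0 with hgq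
  set lq : ℕ → ℝ := fun n =>
    if h : n < T then mcHinge U (x ⟨n, h⟩) (y ⟨n, h⟩) else 0 with hlq
  have hcnn : ∀ n, 0 ≤ c n := by
    intro n; simp only [hc]; split_ifs <;> norm_num
  have hlnn : ∀ n, 0 ≤ lq n := by
    intro n; simp only [hlq]; split_ifs with h
    · exact hinge_nonneg _
    · exact le_refl 0
  -- main induction
  have key : ∀ n, n ≤ T →
      minner U (W n) = ∑ t ∈ Finset.range n, c t * gq t ∧
      minner (W n) (W n) ≤ 2 * X ^ 2 * ∑ t ∈ Finset.range n, c t := by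
    intro n
    induction n with
    | zero => intro _; simp [hW0, minner]
    | succ n ih =>
      intro hn1
      have hn : n < T := hn1
      obtain ⟨ih1, ih2⟩ := ih (le_of_lt hn)
      set t : Fin T := ⟨n, hn⟩ with hts
      have hst := hWsucc t
      set r : ℝ := (if yh t ≠ y t then (1:ℝ) else 0) with hr
      set V := Matrix.vecMulVec (Pi.single (y t) 1 - Pi.single (yh t) 1) (x t) with hV
      have hWn1 : W (n + 1) = W n + r • V := hst
      have hcn : c n = r := by simp only [hc]; rw [dif_pos hn]
      have hgn : gq n = U.mulVec (x t) (y t) - U.mulVec (x t) (yh t) := by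
        simp only [hgq]; rw [dif_pos hn]
      have hUV : minner U V = gq n := by
        rw [hV, minner_vecMulVec, sum_single_diff, hgn]
      have hx2 : ∑ j, x t j ^ 2 ≤ X ^ 2 := by
        nlinarith [Real.sq_sqrt (Finset.sum_nonneg fun j (_ : j ∈ Finset.univ) =>
          sq_nonneg (x t j)), Real.sqrt_nonneg (∑ j, x t j ^ 2), hX t]
      have hcross : minner (W n) V ≤ 0 := by
        rw [hV, minner_vecMulVec, sum_single_diff]
        have := hargmax t (y t)
        simp only [hts] at this ⊢
        linarith
      constructor
      · rw [hWn1, minner_add_smul_right, Finset.sum_range_succ, ih1, hUV, hcn]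
      · rw [hWn1, minner_expand, Finset.sum_range_succ]
        have hterm : r ^ 2 * minner V V ≤ 2 * X ^ 2 * c n := by
          rw [hcn]
          by_cases hmis : yh t ≠ y t
          · have hVV : minner V V = 2 * ∑ j, x t j ^ 2 := by
              rw [hV, vecMulVec_self, sum_single_diff_sq (y t) (yh t) (Ne.symm hmis)]
            rw [hr, if_pos hmis, hVV]
            nlinarith
          · rw [hr, if_neg hmis]
            norm_num
        have hrnn : 0 ≤ r := by rw [hr]; split_ifs <;> norm_num
        have : 2 * r * minner (W n) V ≤ 0 := by nlinarith
        calc minner (W n) (W n) + 2 * r * minner (W n) V + r ^ 2 * minner V V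
            ≤ minner (W n) (W n) + r ^ 2 * minner V V := by linarith
          _ ≤ 2 * X ^ 2 * ∑ t ∈ Finset.range n, c t + 2 * X ^ 2 * c n := by linarith
          _ = 2 * X ^ 2 * (∑ t ∈ Finset.range n, c t + c n) := by ring
      -- done
  obtain ⟨innerT, normT⟩ := key T le_rfl
  -- sum identities
  have hMr : M = ∑ t ∈ Finset.range T, c t := by
    rw [hM, ← Fin.sum_univ_eq_sum_range (fun n => c n) T]
    refine Finset.sum_congr rfl fun t _ => ?_
    simp only [hc]; rw [dif_pos t.isLt]
  have hLr : L₁ = ∑ t ∈ Finset.range T, lq t := by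
    rw [hL₁, ← Fin.sum_univ_eq_sum_range (fun n => lq n) T]
    refine Finset.sum_congr rfl fun t _ => ?_
    simp only [hlq]; rw [dif_pos t.isLt]
  have hMnn : 0 ≤ M := by
    rw [hMr]; exact Finset.sum_nonneg fun n _ => hcnn n
  have hL1nn : 0 ≤ L₁ := by
    rw [hLr]; exact Finset.sum_nonneg fun n _ => hlnn n
  -- lower bound on inner product
  have hlow : M - L₁ ≤ minner U (W T) := by
    rw [innerT, hMr, hLr, ← Finset.sum_sub_distrib]
    refine Finset.sum_le_sum fun n hnm => ?_
    have hn : n < T := Finset.mem_range.mp hnm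
    set t : Fin T := ⟨n, hn⟩ with hts
    have hcn : c n = (if yh t ≠ y t then (1:ℝ) else 0) := by
      simp only [hc]; rw [dif_pos hn]
    have hgn : gq n = U.mulVec (x t) (y t) - U.mulVec (x t) (yh t) := by
      simp only [hgq]; rw [dif_pos hn]
    have hln : lq n = mcHinge U (x t) (y t) := by
      simp only [hlq]; rw [dif_pos hn]
    by_cases hmis : yh t ≠ y t
    · have := hinge_ge t hmis
      rw [hcn, if_pos hmis, hgn, hln]
      linarith
    · rw [hcn, if_neg hmis, hln]
      have := hinge_nonneg t
      simp only [one_mul, zero_mul]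
      linarith
  -- Cauchy–Schwarz
  set S := ∑ i, ∑ j, U i j ^ 2 with hS
  set A := Real.sqrt S with hA
  have hUU : minner U U = S := by
    simp only [minner, hS, pow_two]
  have hcs : minner U (W T) ≤ A * Real.sqrt (2 * X ^ 2 * M) := by
    calc minner U (W T) ≤ Real.sqrt (minner U U) * Real.sqrt (minner (W T) (W T)) :=
          minner_cauchy U (W T)
      _ ≤ A * Real.sqrt (2 * X ^ 2 * M) := by
          rw [hUU]
          exact mul_le_mul_of_nonneg_left (Real.sqrt_le_sqrt (by rw [hMr]; exact normT))
            (Real.sqrt_nonneg _)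
  have hsq : Real.sqrt (2 * X ^ 2 * M) = Real.sqrt 2 * X * Real.sqrt M := by
    rw [show 2 * X ^ 2 * M = (Real.sqrt 2 * X * Real.sqrt M) ^ 2 by
          rw [mul_pow, mul_pow, Real.sq_sqrt (by norm_num : (0:ℝ) ≤ 2), Real.sq_sqrt hMnn],
        Real.sqrt_sq (mul_nonneg (mul_nonneg (Real.sqrt_nonneg _) hXnn) (Real.sqrt_nonneg _))]
  -- put together: M ≤ L₁ + cc * √M with cc = X * A * √2
  set s := Real.sqrt M with hsdef
  set cc := X * A * Real.sqrt 2 with hcc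
  have hAnn : 0 ≤ A := Real.sqrt_nonneg _
  have hccnn : 0 ≤ cc := by
    rw [hcc]; exact mul_nonneg (mul_nonneg hXnn hAnn) (Real.sqrt_nonneg _)
  have hmain : M ≤ L₁ + cc * s := by
    have h1 := hlow.trans hcs
    rw [hsq] at h1
    have h2 : A * (Real.sqrt 2 * X * Real.sqrt M) = cc * s := by rw [hcc, hsdef]; ring
    linarith
  have hs2 : s ^ 2 = M := Real.sq_sqrt hMnn
  have hsn : 0 ≤ s := Real.sqrt_nonneg _
  have hl2 : Real.sqrt L₁ * Real.sqrt L₁ = L₁ := Real.mul_self_sqrt hL1nn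
  have hlnn2 : 0 ≤ Real.sqrt L₁ := Real.sqrt_nonneg _
  have hkey : s ^ 2 ≤ Real.sqrt L₁ * Real.sqrt L₁ + cc * s := by
    rw [hs2, hl2]; linarith
  have final0 := quad_bound s (Real.sqrt L₁) cc hsn hlnn2 hccnn hkey
  have final : M ≤ L₁ + cc ^ 2 + cc * Real.sqrt L₁ := by
    linarith only [final0, hs2, hl2]
  calc M ≤ L₁ + cc ^ 2 + cc * Real.sqrt L₁ := final
    _ = L₁ + 2 * X ^ 2 * A ^ 2 + X * A * Real.sqrt 2 * Real.sqrt L₁ := by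
        rw [hcc]
        have h22 : (Real.sqrt 2) ^ 2 = 2 := Real.sq_sqrt (by norm_num)
        linear_combination (X ^ 2 * A ^ 2) * h22
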